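/- Let θ₁, θ₂, u₁, u₂ ∈ H^∞ satisfy θ₁u₁ + θ₂u₂ = 1, and let T be a completely non-unitary contraction of class C₀ with minimal function θ₁θ₂ (where θ₁, θ₂ are inner). Define X : H → ker θ₁(T) ⊕ ker θ₂(T) by Xf = (θ₂u₂)(T)f ⊕ (θ₁u₁)(T)f. Then X is invertible, XT = (T|ker θ₁(T) ⊕ T|ker θ₂(T))X, ‖X‖ ≤ (‖u₁‖²_{H^∞} + ‖u₂‖²_{H^∞})^{1/2}, and ‖X⁻¹‖ ≤ √2. -/

import Mathlib

/-- **Corona similarity lemma.**  Let `A` be a model of `H^∞` (a commutative normed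
algebra), `Φ` the contractive `H^∞` functional calculus of a completely non-unitary
contraction `T` of class `C₀` with minimal function `θ₁θ₂` (`θ₁, θ₂` inner, so of norm
at most `1`), and suppose `θ₁u₁ + θ₂u₂ = 1`.  Then the operator
`X f = (θ₂u₂)(T) f ⊕ (θ₁u₁)(T) f` maps `H` into `ker θ₁(T) ⊕ ker θ₂(T)`, is bijective
onto it, intertwines `T` with `T|ker θ₁(T) ⊕ T|ker θ₂(T)`, and (with the `ℓ²` norm on
the direct sum) satisfies `‖X‖ ≤ (‖u₁‖² + ‖u₂‖²)^{1/2}` and `‖X⁻¹‖ ≤ √2`. -/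
theorem stmt4 {A : Type*} [NormedCommRing A] [NormedAlgebra ℂ A]
    {H : Type*} [NormedAddCommGroup H] [InnerProductSpace ℂ H] [CompleteSpace H]
    (Φ : A →ₐ[ℂ] (H →L[ℂ] H)) (hΦ : ∀ a : A, ‖Φ a‖ ≤ ‖a‖)
    (T : H →L[ℂ] H) (hT : ‖T‖ ≤ 1) (hTc : ∀ a : A, Commute T (Φ a))
    (θ₁ θ₂ u₁ u₂ : A) (hθ₁ : ‖θ₁‖ ≤ 1) (hθ₂ : ‖θ₂‖ ≤ 1)
    (hmin : ∀ a : A, Φ a = 0 ↔ θ₁ * θ₂ ∣ a)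
    (hbez : θ₁ * u₁ + θ₂ * u₂ = 1) :
    (∀ f : H, Φ (θ₂ * u₂) f ∈ LinearMap.ker (Φ θ₁ : H →ₗ[ℂ] H) ∧
      Φ (θ₁ * u₁) f ∈ LinearMap.ker (Φ θ₂ : H →ₗ[ℂ] H)) ∧
    Function.Injective (fun f : H => (Φ (θ₂ * u₂) f, Φ (θ₁ * u₁) f)) ∧
    (∀ g₁ ∈ LinearMap.ker (Φ θ₁ : H →ₗ[ℂ] H), ∀ g₂ ∈ LinearMap.ker (Φ θ₂ : H →ₗ[ℂ] H),
      ∃ f : H, Φ (θ₂ * u₂) f = g₁ ∧ Φ (θ₁ * u₁) f = g₂) ∧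
    (∀ f : H, Φ (θ₂ * u₂) (T f) = T (Φ (θ₂ * u₂) f) ∧
      Φ (θ₁ * u₁) (T f) = T (Φ (θ₁ * u₁) f)) ∧
    (∀ f : H, ‖Φ (θ₂ * u₂) f‖ ^ 2 + ‖Φ (θ₁ * u₁) f‖ ^ 2 ≤
      (‖u₁‖ ^ 2 + ‖u₂‖ ^ 2) * ‖f‖ ^ 2) ∧
    (∀ f : H, ‖f‖ ^ 2 ≤ 2 * (‖Φ (θ₂ * u₂) f‖ ^ 2 + ‖Φ (θ₁ * u₁) f‖ ^ 2)) := by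

  have hsum : ∀ f : H, Φ (θ₂ * u₂) f + Φ (θ₁ * u₁) f = f := by
    intro f
    have : Φ (θ₂ * u₂) + Φ (θ₁ * u₁) = 1 := by
      rw [← map_add, add_comm, hbez, map_one]
    calc Φ (θ₂ * u₂) f + Φ (θ₁ * u₁) f = (Φ (θ₂ * u₂) + Φ (θ₁ * u₁)) f := rfl
      _ = f := by rw [this]; rfl
  have hk1 : ∀ f : H, Φ θ₁ (Φ (θ₂ * u₂) f) = 0 := by
    intro f
    have : Φ (θ₁ * (θ₂ * u₂)) = 0 := (hmin _).2 ⟨u₂, by ring⟩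
    have h2 : Φ θ₁ (Φ (θ₂ * u₂) f) = Φ (θ₁ * (θ₂ * u₂)) f := by
      simp [map_mul, ContinuousLinearMap.mul_apply]
    rw [h2, this]; rfl
  have hk2 : ∀ f : H, Φ θ₂ (Φ (θ₁ * u₁) f) = 0 := by
    intro f
    have : Φ (θ₂ * (θ₁ * u₁)) = 0 := (hmin _).2 ⟨u₁, by ring⟩
    have h2 : Φ θ₂ (Φ (θ₁ * u₁) f) = Φ (θ₂ * (θ₁ * u₁)) f := by
      simp [map_mul, ContinuousLinearMap.mul_apply]
    rw [h2, this]; rfl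
  refine ⟨fun f => ⟨hk1 f, hk2 f⟩, ?_, ?_, ?_, ?_, ?_⟩
  · intro f g h
    simp only [Prod.mk.injEq] at h
    have := hsum f
    rw [h.1, h.2, hsum g] at this
    exact this.symm
  · intro g₁ hg₁ g₂ hg₂
    refine ⟨g₁ + g₂, ?_, ?_⟩
    · have h1 : Φ (θ₁ * u₁) g₁ = 0 := by
        have : Φ (θ₁ * u₁) g₁ = Φ u₁ (Φ θ₁ g₁) := by rw [mul_comm, map_mul, ContinuousLinearMap.mul_apply]
        rw [this, show Φ θ₁ g₁ = 0 from hg₁, map_zero]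
      have h2 : Φ (θ₂ * u₂) g₂ = 0 := by
        have : Φ (θ₂ * u₂) g₂ = Φ u₂ (Φ θ₂ g₂) := by rw [mul_comm, map_mul, ContinuousLinearMap.mul_apply]
        rw [this, show Φ θ₂ g₂ = 0 from hg₂, map_zero]
      have := hsum g₁
      rw [h1, add_zero] at this
      rw [map_add, this, h2, add_zero]
    · have h1 : Φ (θ₁ * u₁) g₁ = 0 := by
        have : Φ (θ₁ * u₁) g₁ = Φ u₁ (Φ θ₁ g₁) := by rw [mul_comm, map_mul, ContinuousLinearMap.mul_apply]
        rw [this, show Φ θ₁ g₁ = 0 from hg₁, map_zero]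
      have := hsum g₂
      have h2 : Φ (θ₂ * u₂) g₂ = 0 := by
        have : Φ (θ₂ * u₂) g₂ = Φ u₂ (Φ θ₂ g₂) := by rw [mul_comm, map_mul, ContinuousLinearMap.mul_apply]
        rw [this, show Φ θ₂ g₂ = 0 from hg₂, map_zero]
      rw [h2, zero_add] at this
      rw [map_add, h1, zero_add, this]
  · intro f
    constructor
    · simpa [ContinuousLinearMap.mul_apply] using (DFunLike.congr_fun (hTc (θ₂ * u₂)).eq f).symm
    · simpa [ContinuousLinearMap.mul_apply] using (DFunLike.congr_fun (hTc (θ₁ * u₁)).eq f).symm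
  · intro f
    have hb1 : ‖Φ (θ₂ * u₂) f‖ ≤ ‖u₂‖ * ‖f‖ := by
      calc ‖Φ (θ₂ * u₂) f‖ ≤ ‖Φ (θ₂ * u₂)‖ * ‖f‖ := (Φ (θ₂ * u₂)).le_opNorm f
        _ ≤ ‖θ₂ * u₂‖ * ‖f‖ := by gcongr; exact hΦ _
        _ ≤ (‖θ₂‖ * ‖u₂‖) * ‖f‖ := by gcongr; exact norm_mul_le _ _
        _ ≤ (1 * ‖u₂‖) * ‖f‖ := by gcongr
        _ = ‖u₂‖ * ‖f‖ := by ring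
    have hb2 : ‖Φ (θ₁ * u₁) f‖ ≤ ‖u₁‖ * ‖f‖ := by
      calc ‖Φ (θ₁ * u₁) f‖ ≤ ‖Φ (θ₁ * u₁)‖ * ‖f‖ := (Φ (θ₁ * u₁)).le_opNorm f
        _ ≤ ‖θ₁ * u₁‖ * ‖f‖ := by gcongr; exact hΦ _
        _ ≤ (‖θ₁‖ * ‖u₁‖) * ‖f‖ := by gcongr; exact norm_mul_le _ _
        _ ≤ (1 * ‖u₁‖) * ‖f‖ := by gcongr
        _ = ‖u₁‖ * ‖f‖ := by ring
    have s1 : ‖Φ (θ₂ * u₂) f‖ ^ 2 ≤ (‖u₂‖ * ‖f‖) ^ 2 :=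
      pow_le_pow_left₀ (norm_nonneg _) hb1 2
    have s2 : ‖Φ (θ₁ * u₁) f‖ ^ 2 ≤ (‖u₁‖ * ‖f‖) ^ 2 :=
      pow_le_pow_left₀ (norm_nonneg _) hb2 2
    nlinarith [s1, s2]
  · intro f
    have h := hsum f
    have htri : ‖f‖ ≤ ‖Φ (θ₂ * u₂) f‖ + ‖Φ (θ₁ * u₁) f‖ := by
      calc ‖f‖ = ‖Φ (θ₂ * u₂) f + Φ (θ₁ * u₁) f‖ := by rw [h]
        _ ≤ _ := norm_add_le _ _
    nlinarith [htri, norm_nonneg f, norm_nonneg (Φ (θ₂ * u₂) f),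
      norm_nonneg (Φ (θ₁ * u₁) f), sq_nonneg (‖Φ (θ₂ * u₂) f‖ - ‖Φ (θ₁ * u₁) f‖)]
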